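/- Suppose c : [0, 6/7] → ℝ is continuously differentiable, c(0) = 1, and c(t) = cos²(πt/4)·c(t/8) + sin²(πt/4)·c(t/8 + 3/4) for all t ∈ [0, 6/7]. Then c is identically 1 on [0, 6/7]. -/

import Mathlib

open Real

theorem stmt14 (c c' : ℝ → ℝ)
    (hc : ∀ t ∈ Set.Icc (0:ℝ) (6/7), HasDerivWithinAt c (c' t) (Set.Icc (0:ℝ) (6/7)) t)
    (hc' : ContinuousOn c' (Set.Icc (0:ℝ) (6/7)))
    (h0 : c 0 = 1)
    (hfix : ∀ t ∈ Set.Icc (0:ℝ) (6/7),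
      c t = Real.cos (π * t / 4) ^ 2 * c (t / 8)
        + Real.sin (π * t / 4) ^ 2 * c (t / 8 + 3/4)) :
    ∀ t ∈ Set.Icc (0:ℝ) (6/7), c t = 1 := by
  set J := Set.Icc (0:ℝ) (6/7) with hJ
  have hmap1 : ∀ t ∈ J, t/8 ∈ J := by
    rintro t ⟨h1, h2⟩; constructor <;> [linarith; linarith]
  have hmap2 : ∀ t ∈ J, t/8 + 3/4 ∈ J := by
    rintro t ⟨h1, h2⟩; constructor <;> [linarith; linarith]
  have hud : UniqueDiffOn ℝ J := uniqueDiffOn_Icc (by norm_num)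
  -- derivative identity
  have hderiv : ∀ t ∈ J, c' t =
      π/2 * (Real.cos (π*t/4) * Real.sin (π*t/4)) * (c (t/8 + 3/4) - c (t/8))
      + (1/8) * (Real.cos (π*t/4)^2 * c' (t/8) + Real.sin (π*t/4)^2 * c' (t/8 + 3/4)) := by
    intro t ht
    have hu : HasDerivAt (fun x : ℝ => π * x / 4) (π/4) t := by
      simpa using ((hasDerivAt_id t).const_mul π).div_const 4
    have hcos : HasDerivAt (fun x : ℝ => Real.cos (π*x/4))
        (-Real.sin (π*t/4) * (π/4)) t :=
      by have := (Real.hasDerivAt_cos (π*t/4)).comp t hu; exact this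
    have hsin : HasDerivAt (fun x : ℝ => Real.sin (π*x/4))
        (Real.cos (π*t/4) * (π/4)) t :=
      by have := (Real.hasDerivAt_sin (π*t/4)).comp t hu; exact this
    have hcos2 : HasDerivWithinAt (fun x : ℝ => Real.cos (π*x/4)^2)
        (2 * Real.cos (π*t/4) ^ 1 * (-Real.sin (π*t/4) * (π/4))) J t :=
      (hcos.pow 2).hasDerivWithinAt
    have hsin2 : HasDerivWithinAt (fun x : ℝ => Real.sin (π*x/4)^2)
        (2 * Real.sin (π*t/4) ^ 1 * (Real.cos (π*t/4) * (π/4))) J t :=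
      (hsin.pow 2).hasDerivWithinAt
    have hin1 : HasDerivWithinAt (fun x : ℝ => x/8) ((1:ℝ)/8) J t :=
      (hasDerivWithinAt_id t J).div_const 8
    have hin2 : HasDerivWithinAt (fun x : ℝ => x/8 + 3/4) ((1:ℝ)/8) J t :=
      hin1.add_const _
    have hm1 : Set.MapsTo (fun x : ℝ => x/8) J J := fun x hx => hmap1 x hx
    have hm2 : Set.MapsTo (fun x : ℝ => x/8 + 3/4) J J := fun x hx => hmap2 x hx
    have hc1 : HasDerivWithinAt (fun x : ℝ => c (x/8)) (c' (t/8) * (1/8)) J t :=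
      HasDerivWithinAt.comp t (hc _ (hmap1 t ht)) hin1 hm1
    have hc2 : HasDerivWithinAt (fun x : ℝ => c (x/8 + 3/4)) (c' (t/8 + 3/4) * (1/8)) J t :=
      HasDerivWithinAt.comp t (hc _ (hmap2 t ht)) hin2 hm2
    have hg : HasDerivWithinAt
        (fun x : ℝ => Real.cos (π*x/4)^2 * c (x/8) + Real.sin (π*x/4)^2 * c (x/8 + 3/4))
        ((2 * Real.cos (π*t/4) ^ 1 * (-Real.sin (π*t/4) * (π/4))) * c (t/8)
          + Real.cos (π*t/4)^2 * (c' (t/8) * (1/8))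
          + ((2 * Real.sin (π*t/4) ^ 1 * (Real.cos (π*t/4) * (π/4))) * c (t/8 + 3/4)
          + Real.sin (π*t/4)^2 * (c' (t/8 + 3/4) * (1/8)))) J t :=
      (hcos2.mul hc1).add (hsin2.mul hc2)
    have hg' : HasDerivWithinAt c _ J t :=
      hg.congr (fun y hy => (hfix y hy)) (hfix t ht)
    have := (hud t ht).eq_deriv J (hc t ht) hg'
    rw [this]; ring
  -- maximum of |c'| on J
  obtain ⟨t₀, ht₀, hmax⟩ : ∃ t₀ ∈ J, ∀ t ∈ J, |c' t| ≤ |c' t₀| := by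
    obtain ⟨t₀, ht₀, hmax⟩ := (isCompact_Icc).exists_isMaxOn (Set.nonempty_Icc.2 (by norm_num))
      (hc'.abs)
    exact ⟨t₀, ht₀, fun t ht => hmax ht⟩
  set M := |c' t₀| with hM
  have hMnonneg : 0 ≤ M := abs_nonneg _
  -- MVT bound on difference
  have hMVT : ∀ x ∈ J, ∀ y ∈ J, |c y - c x| ≤ M * |y - x| := by
    intro x hx y hy
    have := Convex.norm_image_sub_le_of_norm_hasDerivWithin_le
      (f := c) (f' := c') (C := M) (fun z hz => hc z hz)
      (fun z hz => by simpa using hmax z hz) (convex_Icc _ _) hx hy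
    simpa [Real.norm_eq_abs] using this
  -- contraction at t₀
  have hM0 : M = 0 := by
    have hd := hderiv t₀ ht₀
    set A := Real.cos (π*t₀/4)
    set S := Real.sin (π*t₀/4)
    have hAS : A^2 + S^2 = 1 := by
      have := Real.sin_sq_add_cos_sq (π*t₀/4); simp only [A, S]; linarith
    have hASle : |A * S| ≤ 1/2 := by
      rw [abs_mul]
      nlinarith [abs_nonneg A, abs_nonneg S, sq_abs A, sq_abs S, sq_nonneg (|A| - |S|)]
    have hdiff : |c (t₀/8 + 3/4) - c (t₀/8)| ≤ M * (3/4) := by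
      have := hMVT (t₀/8) (hmap1 t₀ ht₀) (t₀/8 + 3/4) (hmap2 t₀ ht₀)
      have h34 : |(t₀/8 + 3/4) - t₀/8| = 3/4 := by norm_num
      rw [h34] at this; linarith
    have h1 : |c' (t₀/8)| ≤ M := hmax _ (hmap1 t₀ ht₀)
    have h2 : |c' (t₀/8 + 3/4)| ≤ M := hmax _ (hmap2 t₀ ht₀)
    have hpi : (0:ℝ) < π := Real.pi_pos
    have hpile : π < 3.15 := Real.pi_lt_d2
    have hb : M ≤ π/2 * (1/2) * (M * (3/4)) + (1/8) * M := by
      calc M = |c' t₀| := rfl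
        _ ≤ π/2 * |A * S| * |c (t₀/8 + 3/4) - c (t₀/8)|
            + (1/8) * (A^2 * |c' (t₀/8)| + S^2 * |c' (t₀/8 + 3/4)|) := by
            rw [hd]
            refine (abs_add_le _ _).trans (add_le_add ?_ ?_)
            · rw [abs_mul, abs_mul, abs_of_nonneg (by positivity : (0:ℝ) ≤ π/2)]
            · rw [abs_mul, abs_of_nonneg (by norm_num : (0:ℝ) ≤ (1:ℝ)/8)]
              have hab : |A^2 * c' (t₀/8) + S^2 * c' (t₀/8 + 3/4)|
                  ≤ A^2 * |c' (t₀/8)| + S^2 * |c' (t₀/8 + 3/4)| := by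
                refine (abs_add_le _ _).trans (le_of_eq ?_)
                rw [abs_mul, abs_mul, abs_of_nonneg (sq_nonneg A), abs_of_nonneg (sq_nonneg S)]
              linarith
        _ ≤ π/2 * (1/2) * (M * (3/4)) + (1/8) * M := by
            have hASnn : (0:ℝ) ≤ |A*S| := abs_nonneg _
            have hdnn : (0:ℝ) ≤ |c (t₀/8 + 3/4) - c (t₀/8)| := abs_nonneg _
            have e1 : π/2 * |A * S| * |c (t₀/8 + 3/4) - c (t₀/8)| ≤ π/2 * (1/2) * (M * (3/4)) := by
              rw [mul_assoc, mul_assoc]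
              exact mul_le_mul_of_nonneg_left
                (mul_le_mul hASle hdiff hdnn (by norm_num)) (by positivity)
            have e2 : (1/8:ℝ) * (A^2 * |c' (t₀/8)| + S^2 * |c' (t₀/8 + 3/4)|) ≤ (1/8) * M := by
              nlinarith [sq_nonneg A, sq_nonneg S]
            linarith
    nlinarith
  -- conclude: c' = 0 on J, so c constant
  intro t ht
  have hz := hMVT 0 (by constructor <;> norm_num) t ht
  rw [hM0] at hz
  simp at hz
  have : c t = c 0 := by
    have := abs_nonneg (c t - c 0)
    have h' : |c t - c 0| ≤ 0 := by simpa using hz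
    have := abs_eq_zero.mp (le_antisymm h' (abs_nonneg _))
    linarith
  rw [this, h0]
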